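/- Let f_1,…,f_n be affine functions f_i(x) = a_i x + b_i with integer coefficients, a_i > 1, providing a system of exact covering congruences (the progressions f_i(ℤ) partition ℤ). Then ∑_{i=1}^n 1/a_i = 1. -/

import Mathlib

/-- If the integer affine maps `f i = a i * x + b i` (`a i > 1`) give a system of exact
covering congruences (the progressions `f i (ℤ)` partition `ℤ`), then `∑ 1/a i = 1`. -/
theorem stmt_15 (n : ℕ) (a b : Fin n → ℤ) (ha : ∀ i, 1 < a i)
    (hdisj : ∀ i j, i ≠ j →
      Disjoint {y : ℤ | ∃ m : ℤ, y = a i * m + b i}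
               {y : ℤ | ∃ m : ℤ, y = a j * m + b j})
    (hcover : (⋃ i, {y : ℤ | ∃ m : ℤ, y = a i * m + b i}) = Set.univ) :
    ∑ i, (1 : ℝ) / (a i : ℝ) = 1 := by
  classical
  set L : ℤ := ∏ i, a i with hLdef
  have hapos : ∀ i, 0 < a i := fun i => lt_trans one_pos (ha i)
  have hLpos : 0 < L := Finset.prod_pos (fun i _ => hapos i)
  have hdvd : ∀ i, a i ∣ L := fun i => Finset.dvd_prod_of_mem _ (Finset.mem_univ i)
  set T : Fin n → Finset ℤ :=
    fun i => (Finset.Ico (0:ℤ) L).filter (fun y => ∃ m : ℤ, y = a i * m + b i) with hT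
  have hTcard : ∀ i, (T i).card = (L / a i).toNat := by
    intro i
    have hne : a i ≠ 0 := ne_of_gt (hapos i)
    have hr0 : 0 ≤ b i % a i := Int.emod_nonneg _ hne
    have hr1 : b i % a i < a i := Int.emod_lt_of_pos _ (hapos i)
    have hbdiv : a i * (b i / a i) + b i % a i = b i := Int.mul_ediv_add_emod (b i) (a i)
    have hLdiv : a i * (L / a i) = L := Int.mul_ediv_cancel' (hdvd i)
    have himg : T i = (Finset.Ico (0:ℤ) (L / a i)).image (fun k => a i * k + b i % a i) := by
      ext y
      simp only [hT, Finset.mem_filter, Finset.mem_Ico, Finset.mem_image]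
      constructor
      · rintro ⟨⟨hy0, hyL⟩, m, rfl⟩
        refine ⟨m + b i / a i, ⟨?_, ?_⟩, by ring_nf; linarith [hbdiv]⟩
        · have h1 : a i * (-1) < a i * (m + b i / a i) := by nlinarith [hbdiv]
          have := lt_of_mul_lt_mul_left h1 (hapos i).le
          omega
        · have h1 : a i * (m + b i / a i) < a i * (L / a i) := by nlinarith [hbdiv, hLdiv]
          exact lt_of_mul_lt_mul_left h1 (hapos i).le
      · rintro ⟨k, ⟨hk0, hkL⟩, rfl⟩
        refine ⟨⟨by nlinarith, ?_⟩, k - b i / a i, by ring_nf; linarith [hbdiv]⟩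
        have h1 : a i * k ≤ a i * (L / a i - 1) := by
          apply mul_le_mul_of_nonneg_left _ (hapos i).le
          omega
        nlinarith
    rw [himg, Finset.card_image_of_injective _ ?_, Int.card_Ico]
    · simp
    · intro x y hxy
      simp only at hxy
      exact mul_left_cancel₀ hne (by linarith)
  have hunion : Finset.univ.biUnion T = Finset.Ico (0:ℤ) L := by
    apply Finset.Subset.antisymm
    · intro y hy
      obtain ⟨i, _, hyi⟩ := Finset.mem_biUnion.1 hy
      exact (Finset.mem_filter.1 hyi).1
    · intro y hy
      have hyu : y ∈ (⋃ i, {y : ℤ | ∃ m : ℤ, y = a i * m + b i}) := by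
        rw [hcover]; trivial
      obtain ⟨i, hm⟩ := Set.mem_iUnion.1 hyu
      exact Finset.mem_biUnion.2 ⟨i, Finset.mem_univ i, Finset.mem_filter.2 ⟨hy, hm⟩⟩
  have hcard : ∑ i, (T i).card = L.toNat := by
    rw [← Finset.card_biUnion, hunion, Int.card_Ico, sub_zero]
    intro i _ j _ hij
    rw [Function.onFun, Finset.disjoint_left]
    intro y hyi hyj
    have h1 := (Finset.mem_filter.1 hyi).2
    have h2 := (Finset.mem_filter.1 hyj).2
    exact Set.disjoint_left.1 (hdisj i j hij) h1 h2
  have hsumZ : ∑ i, (L / a i) = L := by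
    have : ∀ i, (L / a i) = (((L / a i).toNat : ℤ)) := fun i =>
      (Int.toNat_of_nonneg (Int.ediv_nonneg hLpos.le (hapos i).le)).symm
    calc ∑ i, (L / a i) = ∑ i, (((L / a i).toNat : ℤ)) := Finset.sum_congr rfl (fun i _ => this i)
      _ = ((∑ i, (L / a i).toNat : ℕ) : ℤ) := by push_cast; ring
      _ = ((∑ i, (T i).card : ℕ) : ℤ) := by
          congr 1; exact (Finset.sum_congr rfl (fun i _ => (hTcard i).symm))
      _ = (L.toNat : ℤ) := by rw [hcard]
      _ = L := Int.toNat_of_nonneg hLpos.le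
  have hLne : (L : ℝ) ≠ 0 := by exact_mod_cast ne_of_gt hLpos
  have key : ∀ i, (1:ℝ)/(a i : ℝ) = ((L / a i : ℤ) : ℝ) / (L : ℝ) := by
    intro i
    have hane : (a i : ℝ) ≠ 0 := by exact_mod_cast ne_of_gt (hapos i)
    have h3 : (a i : ℝ) * ((L / a i : ℤ):ℝ) = (L : ℝ) := by
      rw [← Int.cast_mul, Int.mul_ediv_cancel' (hdvd i)]
    field_simp
    linarith [h3]
  calc ∑ i, (1:ℝ)/(a i : ℝ) = ∑ i, ((L / a i : ℤ):ℝ)/(L:ℝ) :=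
        Finset.sum_congr rfl (fun i _ => key i)
    _ = ((∑ i, L / a i : ℤ):ℝ)/(L:ℝ) := by rw [← Finset.sum_div]; push_cast; ring
    _ = 1 := by rw [hsumZ]; field_simp
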